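/- Absoluteness of check-names: (i) for the two-element Boolean algebra 2, for any negation-free sentence ψ(x₁,…,xₙ) of the language of set theory and any sets x₁,…,xₙ, ψ(x₁,…,xₙ) holds in the universe of sets if and only if ‖ψ(x̂₁,…,x̂ₙ)‖^{2} = 1; and (ii) for any complete Heyting algebra A with 0 ≠ 1, for any restricted negation-free sentence φ(x₁,…,xₙ) and any sets x₁,…,xₙ, φ(x₁,…,xₙ) holds in the universe of sets if and only if ‖φ(x̂₁,…,x̂ₙ)‖^{A} = 1. -/

import Mathlib

universe u

namespace Ordinal

/-- Natural (Hessenberg) sum of ordinals. -/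
noncomputable def nadd : Ordinal.{u} → Ordinal.{u} → Ordinal.{u}
  | a, b => max (blsub.{u, u} a fun a' _ => nadd a' b) (blsub.{u, u} b fun b' _ => nadd a b')
termination_by a b => (a, b)

theorem nadd_def (a b : Ordinal.{u}) : nadd a b =
    max (blsub.{u, u} a fun a' _ => nadd a' b) (blsub.{u, u} b fun b' _ => nadd a b') := by
  rw [nadd]

theorem lt_nadd_iff {a b c : Ordinal.{u}} :
    a < nadd b c ↔ (∃ b' < b, a ≤ nadd b' c) ∨ ∃ c' < c, a ≤ nadd b c' := by
  rw [nadd_def]; simp [lt_blsub_iff]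

theorem nadd_le_iff {a b c : Ordinal.{u}} :
    nadd b c ≤ a ↔ (∀ b' < b, nadd b' c < a) ∧ ∀ c' < c, nadd b c' < a := by
  rw [nadd_def]; simp [blsub_le_iff]

theorem nadd_lt_nadd_left {b c : Ordinal.{u}} (h : b < c) (a : Ordinal.{u}) :
    nadd a b < nadd a c :=
  lt_nadd_iff.2 (Or.inr ⟨b, h, le_rfl⟩)

theorem nadd_lt_nadd_right {b c : Ordinal.{u}} (h : b < c) (a : Ordinal.{u}) :
    nadd b a < nadd c a :=
  lt_nadd_iff.2 (Or.inl ⟨b, h, le_rfl⟩)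

theorem nadd_le_nadd_left {b c : Ordinal.{u}} (h : b ≤ c) (a : Ordinal.{u}) :
    nadd a b ≤ nadd a c := by
  rcases lt_or_eq_of_le h with h | rfl
  · exact (nadd_lt_nadd_left h a).le
  · exact le_rfl

theorem nadd_le_nadd_right {b c : Ordinal.{u}} (h : b ≤ c) (a : Ordinal.{u}) :
    nadd b a ≤ nadd c a := by
  rcases lt_or_eq_of_le h with h | rfl
  · exact (nadd_lt_nadd_right h a).le
  · exact le_rfl

theorem nadd_comm (a b : Ordinal.{u}) : nadd a b = nadd b a := by
  apply le_antisymm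
  · rw [nadd_le_iff]
    refine ⟨fun a' ha => ?_, fun b' hb => ?_⟩
    · rw [nadd_comm a' b]; exact nadd_lt_nadd_left ha _
    · rw [nadd_comm a b']; exact nadd_lt_nadd_right hb _
  · rw [nadd_le_iff]
    refine ⟨fun b' hb => ?_, fun a' ha => ?_⟩
    · rw [← nadd_comm a b']; exact nadd_lt_nadd_left hb _
    · rw [← nadd_comm a' b]; exact nadd_lt_nadd_right ha _
termination_by (a, b)

theorem nadd_assoc (a b c : Ordinal.{u}) : nadd (nadd a b) c = nadd a (nadd b c) := by
  apply le_antisymm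
  · rw [nadd_le_iff]
    refine ⟨fun x hx => ?_, fun c' hc => ?_⟩
    · rcases lt_nadd_iff.1 hx with ⟨a', ha, hx⟩ | ⟨b', hb, hx⟩
      · calc nadd x c ≤ nadd (nadd a' b) c := nadd_le_nadd_right hx _
          _ = nadd a' (nadd b c) := nadd_assoc a' b c
          _ < nadd a (nadd b c) := nadd_lt_nadd_right ha _
      · calc nadd x c ≤ nadd (nadd a b') c := nadd_le_nadd_right hx _
          _ = nadd a (nadd b' c) := nadd_assoc a b' c
          _ < nadd a (nadd b c) := nadd_lt_nadd_left (nadd_lt_nadd_right hb _) _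
    · calc nadd (nadd a b) c' = nadd a (nadd b c') := nadd_assoc a b c'
        _ < nadd a (nadd b c) := nadd_lt_nadd_left (nadd_lt_nadd_left hc _) _
  · rw [nadd_le_iff]
    refine ⟨fun a' ha => ?_, fun x hx => ?_⟩
    · calc nadd a' (nadd b c) = nadd (nadd a' b) c := (nadd_assoc a' b c).symm
        _ < nadd (nadd a b) c := nadd_lt_nadd_right (nadd_lt_nadd_right ha _) _
    · rcases lt_nadd_iff.1 hx with ⟨b', hb, hx⟩ | ⟨c', hc, hx⟩
      · calc nadd a x ≤ nadd a (nadd b' c) := nadd_le_nadd_left hx _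
          _ = nadd (nadd a b') c := (nadd_assoc a b' c).symm
          _ < nadd (nadd a b) c := nadd_lt_nadd_right (nadd_lt_nadd_left hb _) _
      · calc nadd a x ≤ nadd a (nadd b c') := nadd_le_nadd_left hx _
          _ = nadd (nadd a b) c' := (nadd_assoc a b c').symm
          _ < nadd (nadd a b) c := nadd_lt_nadd_left hc _
termination_by (a, b, c)

end Ordinal

infixl:65 " ♯ " => Ordinal.nadd

/-- The universe `V^A` of `A`-names over a complete Heyting algebra `A`:
an `A`-name is a function from a set (of previously constructed `A`-names)
into `A`, here encoded by an indexing type `ι`, a family `elts` of names and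
the family `val` of their attached truth values. -/
inductive HName (A : Type u) : Type (u + 1) where
  | mk (ι : Type u) (elts : ι → HName A) (val : ι → A)

namespace HName

variable {A : Type u}

/-- The indexing type of (the domain of) a name. -/
def ι : HName A → Type u
  | mk ι _ _ => ι

/-- The members of (the domain of) a name. -/
def elts : (u : HName A) → u.ι → HName A
  | mk _ e _ => e

/-- The values attached by a name to the members of its domain. -/
def val : (u : HName A) → u.ι → A
  | mk _ _ v => v

/-- Ordinal rank of a name (used for the recursive definition of truth values). -/
noncomputable def rank : HName A → Ordinal.{u}
  | mk _ e _ => Ordinal.lsub fun i => (e i).rank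

theorem rank_lt {ι : Type u} (e : ι → HName A) (v : ι → A) (i : ι) :
    (e i).rank < (mk ι e v).rank := Ordinal.lt_lsub _ i

variable [Order.Frame A]

/-- The truth value `‖u ≈ v‖` of equality of two names, defined by the recursion
`‖u ≈ v‖ = ⨅_{x ∈ dom u} (u(x) ⇨ ‖x ∈ v‖) ⊓ ⨅_{y ∈ dom v} (v(y) ⇨ ‖y ∈ u‖)`,
where `‖x ∈ v‖ = ⨆_{y ∈ dom v} (v(y) ⊓ ‖y ≈ x‖)` is inlined. -/
noncomputable def eqVal : HName A → HName A → A
  | mk ι e a, mk κ f b =>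
      (⨅ i, a i ⇨ ⨆ j, b j ⊓ eqVal (f j) (e i)) ⊓
      (⨅ j, b j ⇨ ⨆ i, a i ⊓ eqVal (e i) (f j))
termination_by u v => max u.rank v.rank
decreasing_by
  · exact max_lt (lt_max_of_lt_right (rank_lt f b j)) (lt_max_of_lt_left (rank_lt e a i))
  · exact max_lt (lt_max_of_lt_left (rank_lt e a i)) (lt_max_of_lt_right (rank_lt f b j))

/-- The truth value `‖u ∈ v‖ = ⨆_{x ∈ dom v} (v(x) ⊓ ‖x ≈ u‖)` of membership. -/
noncomputable def memVal (u v : HName A) : A :=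
  ⨆ j : v.ι, v.val j ⊓ eqVal (v.elts j) u

end HName


/-- Formulas of the pure first-order language of set theory (binary predicates
`∈` and `≈`, connectives `∧`, `∨`, `→`, quantifiers `∃`, `∀`; negation-free),
with free variables among `n` de Bruijn indices; quantifiers bind the last
variable of the context. -/
inductive SFml : Nat → Type where
  | mem {n} (i j : Fin n) : SFml n
  | eq {n} (i j : Fin n) : SFml n
  | and {n} (phi psi : SFml n) : SFml n
  | or {n} (phi psi : SFml n) : SFml n
  | imp {n} (phi psi : SFml n) : SFml n
  | ex {n} (phi : SFml (n + 1)) : SFml n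
  | all {n} (phi : SFml (n + 1)) : SFml n

/-- The compositional truth value of a negation-free formula in the name
universe, with the quantifiers ranging over the names satisfying `D` (taking
`D := fun _ => True` gives the interpretation in all of `V^A`). -/
noncomputable def SFml.valIn (A : Type u) [Order.Frame A] (D : HName A → Prop) :
    {n : Nat} → SFml n → (Fin n → HName A) → A
  | _, .mem i j, rho => HName.memVal (rho i) (rho j)
  | _, .eq i j, rho => HName.eqVal (rho i) (rho j)
  | _, .and phi psi, rho => valIn A D phi rho ⊓ valIn A D psi rho
  | _, .or phi psi, rho => valIn A D phi rho ⊔ valIn A D psi rho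
  | _, .imp phi psi, rho => valIn A D phi rho ⇨ valIn A D psi rho
  | _, .ex phi, rho => ⨆ v : {v : HName A // D v}, valIn A D phi (Fin.snoc rho v.1)
  | _, .all phi, rho => ⨅ v : {v : HName A // D v}, valIn A D phi (Fin.snoc rho v.1)

/-- A formula is restricted if all its quantifiers are bounded, i.e. of the
form `∃y(y∈x ∧ …)` or `∀y(y∈x → …)`. -/
inductive SFml.Restricted : {n : Nat} → SFml n → Prop where
  | mem {n} (i j : Fin n) : Restricted (.mem i j)
  | eq {n} (i j : Fin n) : Restricted (.eq i j)
  | and {n} {phi psi : SFml n} :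
      Restricted phi → Restricted psi → Restricted (.and phi psi)
  | or {n} {phi psi : SFml n} :
      Restricted phi → Restricted psi → Restricted (.or phi psi)
  | imp {n} {phi psi : SFml n} :
      Restricted phi → Restricted psi → Restricted (.imp phi psi)
  | bex {n} (i : Fin n) {phi : SFml (n + 1)} : Restricted phi →
      Restricted (.ex (.and (.mem (Fin.last n) (Fin.castSucc i)) phi))
  | ball {n} (i : Fin n) {phi : SFml (n + 1)} : Restricted phi →
      Restricted (.all (.imp (.mem (Fin.last n) (Fin.castSucc i)) phi))

/-- The check-name of a pre-set, defined by `∈`-recursion: `x̂` has domain the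
check-names of the members of `x` and constant value `1`. -/
noncomputable def pcheck (A : Type u) [Order.Frame A] : PSet.{u} → HName A
  | .mk _ f => HName.mk _ (fun i => pcheck A (f i)) (fun _ => ⊤)

/-- The check-name `v̂ ∈ V^A` of a set `v` of the von Neumann universe
(modeled by `ZFSet`). -/
noncomputable def check (A : Type u) [Order.Frame A] (v : ZFSet.{u}) : HName A :=
  pcheck A v.out

/-- Standard Tarskian satisfaction of a set-theoretic formula in the universe
of sets, with `∈` and `≈` interpreted as membership and equality of sets. -/
def SFml.sat : {n : Nat} → SFml n → (Fin n → ZFSet.{u}) → Prop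
  | _, .mem i j, rho => rho i ∈ rho j
  | _, .eq i j, rho => rho i = rho j
  | _, .and phi psi, rho => sat phi rho ∧ sat psi rho
  | _, .or phi psi, rho => sat phi rho ∨ sat psi rho
  | _, .imp phi psi, rho => sat phi rho → sat psi rho
  | _, .ex phi, rho => ∃ v : ZFSet.{u}, sat phi (Fin.snoc rho v)
  | _, .all phi, rho => ∀ v : ZFSet.{u}, sat phi (Fin.snoc rho v)

/-! ### Auxiliary development -/

section Aux

namespace HName

variable {A : Type u} [Order.Frame A]

theorem memVal_eq (u v : HName A) :
    memVal u v = ⨆ j : v.ι, v.val j ⊓ eqVal (v.elts j) u := rfl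

theorem eqVal_def' {ι κ : Type u} (e : ι → HName A) (a : ι → A)
    (f : κ → HName A) (b : κ → A) :
    eqVal (mk ι e a) (mk κ f b) =
      (⨅ i, a i ⇨ memVal (e i) (mk κ f b)) ⊓
        (⨅ j, b j ⇨ memVal (f j) (mk ι e a)) := by
  rw [eqVal]; rfl

theorem eqVal_def (u v : HName A) :
    eqVal u v =
      (⨅ i, u.val i ⇨ memVal (u.elts i) v) ⊓
        (⨅ j, v.val j ⇨ memVal (v.elts j) u) := by
  cases u; cases v; exact eqVal_def' ..

theorem eqVal_comm (u v : HName A) : eqVal u v = eqVal v u := by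
  rw [eqVal_def, eqVal_def, inf_comm]

theorem eqVal_self (u : HName A) : eqVal u u = ⊤ := by
  induction u with
  | mk ι e a ih =>
    have h : ∀ i, a i ≤ memVal (e i) (mk ι e a) := fun i => by
      rw [memVal_eq]
      refine le_trans ?_ (le_iSup _ i)
      show a i ≤ a i ⊓ eqVal (e i) (e i)
      rw [ih i, inf_top_eq]
    rw [eqVal_def', eq_top_iff]
    exact le_inf (le_iInf fun i => le_himp_iff.mpr (by simpa using h i))
      (le_iInf fun i => le_himp_iff.mpr (by simpa using h i))

theorem eqVal_inf_val_le (u v : HName A) (i : u.ι) :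
    eqVal u v ⊓ u.val i ≤ memVal (u.elts i) v := by
  refine le_trans (inf_le_inf_right _ ?_) himp_inf_le
  rw [eqVal_def]
  exact inf_le_of_left_le (iInf_le _ i)

theorem eqVal_inf_val_le' (u v : HName A) (j : v.ι) :
    eqVal u v ⊓ v.val j ≤ memVal (v.elts j) u := by
  refine le_trans (inf_le_inf_right _ ?_) himp_inf_le
  rw [eqVal_def]
  exact inf_le_of_right_le (iInf_le _ j)

theorem rank_elts_lt (u : HName A) (i : u.ι) : rank (u.elts i) < rank u := by
  cases u; exact rank_lt _ _ _

private theorem aux1 {a b c a' : Ordinal.{u}} (h : a' < a) :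
    (b ♯ c) ♯ a' < (a ♯ b) ♯ c := by
  calc (b ♯ c) ♯ a' < (b ♯ c) ♯ a := Ordinal.nadd_lt_nadd_left h _
    _ = (a ♯ b) ♯ c := by
        rw [Ordinal.nadd_comm (b ♯ c) a, ← Ordinal.nadd_assoc]

private theorem aux2 {a b c c' : Ordinal.{u}} (h : c' < c) :
    (b ♯ a) ♯ c' < (a ♯ b) ♯ c := by
  rw [Ordinal.nadd_comm b a]; exact Ordinal.nadd_lt_nadd_left h _

private theorem aux3 {a b c c' : Ordinal.{u}} (h : c' < c) :
    (c' ♯ a) ♯ b < (a ♯ b) ♯ c := by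
  calc (c' ♯ a) ♯ b = (a ♯ b) ♯ c' := by
        rw [Ordinal.nadd_assoc, Ordinal.nadd_comm c']
    _ < (a ♯ b) ♯ c := Ordinal.nadd_lt_nadd_left h _

private theorem aux4 {a b c a' b' : Ordinal.{u}} (ha : a' < a) (hb : b' < b) :
    (b' ♯ a') ♯ c < (a ♯ b) ♯ c := by
  refine Ordinal.nadd_lt_nadd_right ?_ _
  calc b' ♯ a' < b' ♯ a := Ordinal.nadd_lt_nadd_left ha _
    _ = a ♯ b' := Ordinal.nadd_comm _ _
    _ < a ♯ b := Ordinal.nadd_lt_nadd_left hb _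

/-- The fundamental congruence properties of the truth values of equality and
membership, proved simultaneously by induction on ranks. -/
theorem key (u v w : HName A) :
    eqVal u v ⊓ eqVal v w ≤ eqVal u w ∧
      eqVal u v ⊓ memVal u w ≤ memVal v w ∧
        eqVal u v ⊓ memVal w u ≤ memVal w v := by
  refine ⟨?_, ?_, ?_⟩
  · -- transitivity
    rw [eqVal_def u w]
    refine le_inf (le_iInf fun i => le_himp_iff.mpr ?_)
      (le_iInf fun k => le_himp_iff.mpr ?_)
    · have h1 : eqVal u v ⊓ u.val i ≤ memVal (u.elts i) v := eqVal_inf_val_le ..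
      have h2 : eqVal v w ⊓ memVal (u.elts i) v ≤ memVal (u.elts i) w :=
        (key v w (u.elts i)).2.2
      calc eqVal u v ⊓ eqVal v w ⊓ u.val i
          = eqVal v w ⊓ (eqVal u v ⊓ u.val i) := by
            rw [inf_comm (eqVal u v), inf_assoc]
        _ ≤ eqVal v w ⊓ memVal (u.elts i) v := inf_le_inf_left _ h1
        _ ≤ memVal (u.elts i) w := h2
    · have h1 : eqVal v w ⊓ w.val k ≤ memVal (w.elts k) v := eqVal_inf_val_le' ..
      have h2 : eqVal v u ⊓ memVal (w.elts k) v ≤ memVal (w.elts k) u :=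
        (key v u (w.elts k)).2.2
      calc eqVal u v ⊓ eqVal v w ⊓ w.val k
          = eqVal u v ⊓ (eqVal v w ⊓ w.val k) := by rw [inf_assoc]
        _ ≤ eqVal u v ⊓ memVal (w.elts k) v := inf_le_inf_left _ h1
        _ = eqVal v u ⊓ memVal (w.elts k) v := by rw [eqVal_comm]
        _ ≤ memVal (w.elts k) u := h2
  · -- substitution on the left of membership
    rw [memVal_eq u w, inf_iSup_eq]
    refine iSup_le fun k => ?_
    have h : eqVal (w.elts k) u ⊓ eqVal u v ≤ eqVal (w.elts k) v :=
      (key (w.elts k) u v).1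
    refine le_trans ?_ (le_iSup (fun k => w.val k ⊓ eqVal (w.elts k) v) k)
    calc eqVal u v ⊓ (w.val k ⊓ eqVal (w.elts k) u)
        ≤ w.val k ⊓ (eqVal (w.elts k) u ⊓ eqVal u v) := by
          refine le_inf (inf_le_of_right_le inf_le_left)
            (le_inf (inf_le_of_right_le inf_le_right) inf_le_left)
      _ ≤ w.val k ⊓ eqVal (w.elts k) v := inf_le_inf_left _ h
  · -- substitution on the right of membership
    rw [memVal_eq w u, inf_iSup_eq]
    refine iSup_le fun i => ?_
    have h1 : eqVal u v ⊓ u.val i ≤ memVal (u.elts i) v := eqVal_inf_val_le ..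
    have step : eqVal u v ⊓ (u.val i ⊓ eqVal (u.elts i) w)
        ≤ memVal (u.elts i) v ⊓ eqVal (u.elts i) w := by
      refine le_inf (le_trans ?_ h1) (inf_le_of_right_le inf_le_right)
      exact le_inf inf_le_left (inf_le_of_right_le inf_le_left)
    refine le_trans step ?_
    rw [memVal_eq (u.elts i) v, iSup_inf_eq]
    refine iSup_le fun j => ?_
    have h2 : eqVal (v.elts j) (u.elts i) ⊓ eqVal (u.elts i) w
        ≤ eqVal (v.elts j) w := (key (v.elts j) (u.elts i) w).1
    refine le_trans ?_ (le_iSup (fun j => v.val j ⊓ eqVal (v.elts j) w) j)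
    calc v.val j ⊓ eqVal (v.elts j) (u.elts i) ⊓ eqVal (u.elts i) w
        = v.val j ⊓ (eqVal (v.elts j) (u.elts i) ⊓ eqVal (u.elts i) w) := by
          rw [inf_assoc]
      _ ≤ v.val j ⊓ eqVal (v.elts j) w := inf_le_inf_left _ h2
termination_by (rank u ♯ rank v) ♯ rank w
decreasing_by
  · exact aux1 (rank_elts_lt u i)
  · exact aux2 (rank_elts_lt w k)
  · exact aux3 (rank_elts_lt w k)
  · exact aux4 (rank_elts_lt u i) (rank_elts_lt v j)

theorem eqVal_trans (u v w : HName A) : eqVal u v ⊓ eqVal v w ≤ eqVal u w :=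
  (key u v w).1

theorem eqVal_inf_memVal_left (u v w : HName A) :
    eqVal u v ⊓ memVal u w ≤ memVal v w := (key u v w).2.1

theorem eqVal_inf_memVal_right (u v w : HName A) :
    eqVal u v ⊓ memVal w u ≤ memVal w v := (key u v w).2.2

end HName

section Frame

open HName

variable {A : Type u} [Order.Frame A]

/-- Equality is a congruence for the truth values of negation-free formulas. -/
theorem valIn_congr (D : HName A → Prop) {n : Nat} (phi : SFml n)
    (rho rho' : Fin n → HName A) :
    (⨅ i, eqVal (rho i) (rho' i)) ⊓ SFml.valIn A D phi rho ≤
      SFml.valIn A D phi rho' := by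
  induction phi with
  | mem i j =>
    simp only [SFml.valIn]
    have h1 := eqVal_inf_memVal_left (rho i) (rho' i) (rho j)
    have h2 := eqVal_inf_memVal_right (rho j) (rho' j) (rho' i)
    calc (⨅ i, eqVal (rho i) (rho' i)) ⊓ memVal (rho i) (rho j)
        ≤ eqVal (rho j) (rho' j) ⊓ (eqVal (rho i) (rho' i) ⊓ memVal (rho i) (rho j)) :=
          le_inf (inf_le_of_left_le (iInf_le _ j))
            (inf_le_inf_right _ (iInf_le _ i))
      _ ≤ eqVal (rho j) (rho' j) ⊓ memVal (rho' i) (rho j) := inf_le_inf_left _ h1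
      _ ≤ memVal (rho' i) (rho' j) := h2
  | eq i j =>
    simp only [SFml.valIn]
    have h1 := eqVal_trans (rho' i) (rho i) (rho j)
    have h2 := eqVal_trans (rho' i) (rho j) (rho' j)
    have step : (⨅ i, eqVal (rho i) (rho' i)) ⊓ eqVal (rho i) (rho j)
        ≤ eqVal (rho' i) (rho j) := by
      refine le_trans ?_ h1
      refine inf_le_inf_right _ ?_
      refine le_trans (iInf_le _ i) (le_of_eq (eqVal_comm _ _))
    refine le_trans (le_inf step (inf_le_of_left_le (iInf_le _ j))) h2
  | and phi psi ih1 ih2 =>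
    simp only [SFml.valIn]
    exact le_inf (le_trans (inf_le_inf_left _ inf_le_left) (ih1 rho rho'))
      (le_trans (inf_le_inf_left _ inf_le_right) (ih2 rho rho'))
  | or phi psi ih1 ih2 =>
    simp only [SFml.valIn]
    rw [inf_sup_left]
    exact sup_le (le_trans (ih1 rho rho') le_sup_left)
      (le_trans (ih2 rho rho') le_sup_right)
  | imp phi psi ih1 ih2 =>
    simp only [SFml.valIn]
    rw [le_himp_iff]
    set c := ⨅ i, eqVal (rho i) (rho' i) with hc
    have csymm : c ≤ ⨅ i, eqVal (rho' i) (rho i) :=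
      le_iInf fun i => le_trans (iInf_le _ i) (le_of_eq (eqVal_comm _ _))
    set X := c ⊓ (SFml.valIn A D phi rho ⇨ SFml.valIn A D psi rho) ⊓
      SFml.valIn A D phi rho' with hX
    have hXp : X ≤ SFml.valIn A D phi rho := by
      refine le_trans (le_inf (inf_le_of_left_le inf_le_left) inf_le_right) ?_
      exact le_trans (inf_le_inf_right _ csymm) (ih1 rho' rho)
    have hXq : X ≤ SFml.valIn A D psi rho := by
      refine le_trans (le_inf (inf_le_of_left_le inf_le_right) hXp) himp_inf_le
    exact le_trans (le_inf (inf_le_of_left_le inf_le_left) hXq) (ih2 rho rho')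
  | ex phi ih =>
    simp only [SFml.valIn]
    rw [inf_iSup_eq]
    refine iSup_le fun v => le_trans ?_ (le_iSup _ v)
    refine le_trans (inf_le_inf_right _ ?_) (ih _ _)
    refine le_iInf fun i => ?_
    refine Fin.lastCases ?_ (fun i => ?_) i
    · simp only [Fin.snoc_last]
      rw [eqVal_self]; exact le_top
    · simp only [Fin.snoc_castSucc]
      exact iInf_le _ i
  | all phi ih =>
    simp only [SFml.valIn]
    refine le_iInf fun v => ?_
    refine le_trans (inf_le_inf_left _ (iInf_le _ v)) ?_
    refine le_trans (inf_le_inf_right _ ?_) (ih _ _)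
    refine le_iInf fun i => ?_
    refine Fin.lastCases ?_ (fun i => ?_) i
    · simp only [Fin.snoc_last]
      rw [eqVal_self]; exact le_top
    · simp only [Fin.snoc_castSucc]
      exact iInf_le _ i

/-- Congruence in the last (snoc) position. -/
theorem valIn_snoc_congr (D : HName A → Prop) {n : Nat} (phi : SFml (n + 1))
    (rho : Fin n → HName A) (v w : HName A) :
    eqVal v w ⊓ SFml.valIn A D phi (Fin.snoc rho v) ≤
      SFml.valIn A D phi (Fin.snoc rho w) := by
  refine le_trans (inf_le_inf_right _ ?_) (valIn_congr D phi _ _)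
  refine le_iInf fun i => ?_
  refine Fin.lastCases ?_ (fun i => ?_) i
  · simp only [Fin.snoc_last]; exact le_refl _
  · simp only [Fin.snoc_castSucc]
    rw [eqVal_self]; exact le_top

theorem valIn_snoc_congr_eq (D : HName A → Prop) {n : Nat} (phi : SFml (n + 1))
    (rho : Fin n → HName A) {v w : HName A} (h : eqVal v w = ⊤) :
    SFml.valIn A D phi (Fin.snoc rho v) = SFml.valIn A D phi (Fin.snoc rho w) := by
  refine le_antisymm ?_ ?_
  · simpa [h] using valIn_snoc_congr D phi rho v w
  · have h' : eqVal w v = ⊤ := by rw [eqVal_comm]; exact h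
    simpa [h'] using valIn_snoc_congr D phi rho w v

theorem mem_pset_mk_iff {x : PSet.{u}} {β : Type u} {g : β → PSet.{u}} :
    x ∈ PSet.mk β g ↔ ∃ j, PSet.Equiv x (g j) := by
  constructor
  · rintro ⟨j, h⟩; exact ⟨j, h⟩
  · rintro ⟨j, h⟩; exact ⟨j, h⟩

/-- The truth values of equality between check-names are `⊤` or `⊥`. -/
theorem pcheck_eqVal (x : PSet.{u}) : ∀ y : PSet.{u},
    (PSet.Equiv x y → eqVal (pcheck A x) (pcheck A y) = ⊤) ∧
      (¬PSet.Equiv x y → eqVal (pcheck A x) (pcheck A y) = ⊥) := by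
  induction x with
  | mk α f ih =>
    intro y
    obtain ⟨β, g⟩ := y
    rw [pcheck, pcheck]
    constructor
    · rintro ⟨h1, h2⟩
      rw [eqVal_def', eq_top_iff]
      refine le_inf (le_iInf fun i => ?_) (le_iInf fun j => ?_)
      · obtain ⟨j, hj⟩ := h1 i
        show ⊤ ≤ ⊤ ⇨ HName.memVal _ _
        rw [top_himp, memVal_eq]
        refine le_trans ?_ (le_iSup _ j)
        show ⊤ ≤ ⊤ ⊓ eqVal (pcheck A (g j)) (pcheck A (f i))
        rw [eqVal_comm, (ih i (g j)).1 hj, inf_top_eq]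
      · obtain ⟨i, hi⟩ := h2 j
        show ⊤ ≤ ⊤ ⇨ HName.memVal _ _
        rw [top_himp, memVal_eq]
        refine le_trans ?_ (le_iSup _ i)
        show ⊤ ≤ ⊤ ⊓ eqVal (pcheck A (f i)) (pcheck A (g j))
        rw [(ih i (g j)).1 hi, inf_top_eq]
    · intro h
      have h' : (∃ i, ∀ j, ¬PSet.Equiv (f i) (g j)) ∨
          (∃ j, ∀ i, ¬PSet.Equiv (f i) (g j)) := by
        by_contra hc
        push_neg at hc
        exact h ⟨hc.1, hc.2⟩
      rw [eqVal_def', eq_bot_iff]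
      rcases h' with ⟨i, hi⟩ | ⟨j, hj⟩
      · refine le_trans inf_le_left (le_trans (iInf_le _ i) ?_)
        show (⊤ : A) ⇨ HName.memVal _ _ ≤ ⊥
        rw [top_himp, memVal_eq]
        refine iSup_le fun j => ?_
        show (⊤ : A) ⊓ eqVal (pcheck A (g j)) (pcheck A (f i)) ≤ ⊥
        rw [eqVal_comm, (ih i (g j)).2 (hi j), inf_bot_eq]
      · refine le_trans inf_le_right (le_trans (iInf_le _ j) ?_)
        show (⊤ : A) ⇨ HName.memVal _ _ ≤ ⊥
        rw [top_himp, memVal_eq]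
        refine iSup_le fun i => ?_
        show (⊤ : A) ⊓ eqVal (pcheck A (f i)) (pcheck A (g j)) ≤ ⊥
        rw [(ih i (g j)).2 (hj i), inf_bot_eq]

theorem pcheck_memVal (x y : PSet.{u}) :
    (x ∈ y → memVal (pcheck A x) (pcheck A y) = ⊤) ∧
      (x ∉ y → memVal (pcheck A x) (pcheck A y) = ⊥) := by
  obtain ⟨β, g⟩ := y
  rw [show pcheck A (PSet.mk β g) = HName.mk β (fun j => pcheck A (g j)) (fun _ => ⊤) from by rw [pcheck]]
  constructor
  · intro h
    obtain ⟨j, hj⟩ := mem_pset_mk_iff.mp h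
    rw [memVal_eq, eq_top_iff]
    refine le_trans ?_ (le_iSup _ j)
    show ⊤ ≤ ⊤ ⊓ eqVal (pcheck A (g j)) (pcheck A x)
    rw [(pcheck_eqVal (g j) x).1 hj.symm, inf_top_eq]
  · intro h
    rw [memVal_eq, eq_bot_iff]
    refine iSup_le fun j => ?_
    show (⊤ : A) ⊓ eqVal (pcheck A (g j)) (pcheck A x) ≤ ⊥
    have : ¬PSet.Equiv (g j) x := fun hc => h (mem_pset_mk_iff.mpr ⟨j, hc.symm⟩)
    rw [(pcheck_eqVal (g j) x).2 this, inf_bot_eq]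

theorem check_eqVal_top {v w : ZFSet.{u}} (h : v = w) :
    eqVal (check A v) (check A w) = ⊤ :=
  (pcheck_eqVal _ _).1 (Quotient.out_equiv_out.mpr h)

theorem check_eqVal_bot {v w : ZFSet.{u}} (h : v ≠ w) :
    eqVal (check A v) (check A w) = ⊥ :=
  (pcheck_eqVal _ _).2 fun hc => h (Quotient.out_equiv_out.mp hc)

theorem mem_iff_out_mem {v w : ZFSet.{u}} : v ∈ w ↔ v.out ∈ w.out := by
  rw [← ZFSet.mk_mem_iff, ZFSet.mk_out, ZFSet.mk_out]

theorem check_memVal_top {v w : ZFSet.{u}} (h : v ∈ w) :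
    memVal (check A v) (check A w) = ⊤ :=
  (pcheck_memVal _ _).1 (mem_iff_out_mem.mp h)

theorem check_memVal_bot {v w : ZFSet.{u}} (h : v ∉ w) :
    memVal (check A v) (check A w) = ⊥ :=
  (pcheck_memVal _ _).2 fun hc => h (mem_iff_out_mem.mpr hc)

section Restricted

open HName Classical

variable {A : Type u} [Order.Frame A]

theorem check_snoc (x : Fin n → ZFSet.{u}) (y : ZFSet.{u}) :
    (fun i => check A ((Fin.snoc x y : Fin (n+1) → ZFSet.{u}) i)) =
      Fin.snoc (fun i => check A (x i)) (check A y) := by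
  funext i
  refine Fin.lastCases ?_ (fun i => ?_) i <;>
    simp [Fin.snoc_last, Fin.snoc_castSucc]

open Classical in
/-- Truth values of restricted formulas at check-names are `⊤` or `⊥`,
according to actual satisfaction. -/
theorem valIn_check_restricted {n : Nat} {phi : SFml n} (hres : phi.Restricted)
    (x : Fin n → ZFSet.{u}) :
    SFml.valIn A (fun _ => True) phi (fun i => check A (x i)) =
      if phi.sat x then ⊤ else ⊥ := by
  induction hres with
  | mem i j =>
    simp only [SFml.valIn, SFml.sat]
    by_cases h : x i ∈ x j
    · rw [check_memVal_top h]; exact (if_pos h).symm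
    · rw [check_memVal_bot h]; exact (if_neg h).symm
  | eq i j =>
    simp only [SFml.valIn, SFml.sat]
    by_cases h : x i = x j
    · rw [check_eqVal_top h]; exact (if_pos h).symm
    · rw [check_eqVal_bot h]; exact (if_neg h).symm
  | @and m phi' psi' h1 h2 ih1 ih2 =>
    simp only [SFml.valIn, SFml.sat]
    rw [ih1, ih2]
    by_cases hp : phi'.sat x <;> by_cases hq : psi'.sat x <;>
      simp [hp, hq]
  | @or m phi' psi' h1 h2 ih1 ih2 =>
    simp only [SFml.valIn, SFml.sat]
    rw [ih1, ih2]
    by_cases hp : phi'.sat x <;> by_cases hq : psi'.sat x <;>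
      simp [hp, hq]
  | @imp m phi' psi' h1 h2 ih1 ih2 =>
    simp only [SFml.valIn, SFml.sat]
    rw [ih1, ih2]
    by_cases hp : phi'.sat x <;> by_cases hq : psi'.sat x <;>
      simp [hp, hq]
  | @bex n i phi hres ih =>
    simp only [SFml.valIn, SFml.sat, Fin.snoc_last, Fin.snoc_castSucc]
    -- destructure (x i).out
    obtain ⟨p, hp⟩ : ∃ p : PSet.{u}, (x i).out = p := ⟨_, rfl⟩
    have hmkp : ZFSet.mk p = x i := by rw [← hp, ZFSet.mk_out]
    obtain ⟨β, g⟩ := p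
    have hcheck : check A (x i) = HName.mk β (fun j => pcheck A (g j)) (fun _ => ⊤) := by
      rw [check, hp, pcheck]
    have hmem : ∀ j, ZFSet.mk (g j) ∈ x i := by
      intro j
      rw [← hmkp, ZFSet.mk_mem_iff]
      exact mem_pset_mk_iff.mpr ⟨j, PSet.Equiv.refl _⟩
    have hval : ∀ j : β,
        SFml.valIn A (fun _ => True) phi
          (Fin.snoc (fun i => check A (x i)) (pcheck A (g j))) =
        if phi.sat (Fin.snoc x (ZFSet.mk (g j))) then ⊤ else ⊥ := by
      intro j
      have he : eqVal (pcheck A (g j)) (check A (ZFSet.mk (g j))) = ⊤ :=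
        (pcheck_eqVal _ _).1 (PSet.Equiv.symm (Quotient.mk_out (g j)))
      rw [valIn_snoc_congr_eq _ _ _ he, ← check_snoc, ih]
    by_cases hsat : ∃ v : ZFSet.{u}, v ∈ x i ∧ phi.sat (Fin.snoc x v)
    · rw [if_pos hsat]
      obtain ⟨v, hv, hs⟩ := hsat
      rw [eq_top_iff]
      refine le_trans ?_ (le_iSup _ ⟨check A v, trivial⟩)
      show ⊤ ≤ memVal (check A v) (check A (x i)) ⊓ _
      rw [check_memVal_top hv, ← check_snoc, ih, if_pos hs, inf_top_eq]
    · rw [if_neg hsat, eq_bot_iff]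
      refine iSup_le fun v => ?_
      have hb : ∀ j : β,
          eqVal (pcheck A (g j)) v.1 ⊓
            SFml.valIn A (fun _ => True) phi
              (Fin.snoc (fun i => check A (x i)) v.1) ≤ ⊥ := by
        intro j
        have hns : ¬phi.sat (Fin.snoc x (ZFSet.mk (g j))) := fun hc =>
          hsat ⟨ZFSet.mk (g j), hmem j, hc⟩
        calc eqVal (pcheck A (g j)) v.1 ⊓ _
            ≤ SFml.valIn A (fun _ => True) phi
                (Fin.snoc (fun i => check A (x i)) (pcheck A (g j))) := by
              have := valIn_snoc_congr (fun _ => True) phi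
                (fun i => check A (x i)) v.1 (pcheck A (g j))
              rw [eqVal_comm] at this
              exact this
          _ = ⊥ := by rw [hval j, if_neg hns]
      rw [hcheck, memVal_eq]
      show (⨆ j : β, (⊤ : A) ⊓ eqVal (pcheck A (g j)) v.1) ⊓ _ ≤ ⊥
      rw [iSup_inf_eq]
      refine iSup_le fun j => ?_
      rw [top_inf_eq]
      exact hb j
  | @ball n i phi hres ih =>
    simp only [SFml.valIn, SFml.sat, Fin.snoc_last, Fin.snoc_castSucc]
    obtain ⟨p, hp⟩ : ∃ p : PSet.{u}, (x i).out = p := ⟨_, rfl⟩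
    have hmkp : ZFSet.mk p = x i := by rw [← hp, ZFSet.mk_out]
    obtain ⟨β, g⟩ := p
    have hcheck : check A (x i) = HName.mk β (fun j => pcheck A (g j)) (fun _ => ⊤) := by
      rw [check, hp, pcheck]
    have hmem : ∀ j, ZFSet.mk (g j) ∈ x i := by
      intro j
      rw [← hmkp, ZFSet.mk_mem_iff]
      exact mem_pset_mk_iff.mpr ⟨j, PSet.Equiv.refl _⟩
    have hval : ∀ j : β,
        SFml.valIn A (fun _ => True) phi
          (Fin.snoc (fun i => check A (x i)) (pcheck A (g j))) =
        if phi.sat (Fin.snoc x (ZFSet.mk (g j))) then ⊤ else ⊥ := by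
      intro j
      have he : eqVal (pcheck A (g j)) (check A (ZFSet.mk (g j))) = ⊤ :=
        (pcheck_eqVal _ _).1 (PSet.Equiv.symm (Quotient.mk_out (g j)))
      rw [valIn_snoc_congr_eq _ _ _ he, ← check_snoc, ih]
    by_cases hsat : ∀ v : ZFSet.{u}, v ∈ x i → phi.sat (Fin.snoc x v)
    · rw [if_pos hsat, eq_top_iff]
      refine le_iInf fun v => le_himp_iff.mpr ?_
      rw [top_inf_eq, hcheck, memVal_eq]
      show (⨆ j : β, (⊤ : A) ⊓ eqVal (pcheck A (g j)) v.1) ≤ _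
      refine iSup_le fun j => ?_
      rw [top_inf_eq]
      have h1 : SFml.valIn A (fun _ => True) phi
          (Fin.snoc (fun i => check A (x i)) (pcheck A (g j))) = ⊤ := by
        rw [hval j, if_pos (hsat _ (hmem j))]
      calc eqVal (pcheck A (g j)) v.1
          = eqVal (pcheck A (g j)) v.1 ⊓ SFml.valIn A (fun _ => True) phi
              (Fin.snoc (fun i => check A (x i)) (pcheck A (g j))) := by
            rw [h1, inf_top_eq]
        _ ≤ _ := valIn_snoc_congr (fun _ => True) phi _ _ _
    · rw [if_neg hsat, eq_bot_iff]
      push_neg at hsat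
      obtain ⟨v, hv, hns⟩ := hsat
      refine le_trans (iInf_le _ ⟨check A v, trivial⟩) ?_
      show memVal (check A v) (check A (x i)) ⇨ _ ≤ ⊥
      rw [check_memVal_top hv, top_himp, ← check_snoc, ih, if_neg hns]

end Restricted

section PropAlg

open HName

/-- Collapse of a `Prop`-name to a pre-set. -/
noncomputable def collapse : HName Prop → PSet.{0}
  | .mk _ e a => PSet.mk {i // a i} fun i => collapse (e i.1)

theorem eqVal_collapse : ∀ u v : HName Prop,
    eqVal u v ↔ PSet.Equiv (collapse u) (collapse v)
  | .mk ι e a, .mk κ f b => by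
    rw [HName.eqVal, collapse, collapse]
    simp only [iInf_Prop_eq, iSup_Prop_eq, inf_Prop_eq, himp_iff_imp]
    constructor
    · rintro ⟨h1, h2⟩
      refine ⟨fun i => ?_, fun j => ?_⟩
      · obtain ⟨j, hbj, he⟩ := h1 i.1 i.2
        exact ⟨⟨j, hbj⟩, ((eqVal_collapse (f j) (e i.1)).mp he).symm⟩
      · obtain ⟨i, hai, he⟩ := h2 j.1 j.2
        exact ⟨⟨i, hai⟩, (eqVal_collapse (e i) (f j.1)).mp he⟩
    · rintro ⟨h1, h2⟩
      refine ⟨fun i hi => ?_, fun j hj => ?_⟩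
      · obtain ⟨j, hj⟩ := h1 ⟨i, hi⟩
        exact ⟨j.1, j.2, (eqVal_collapse (f j.1) (e i)).mpr hj.symm⟩
      · obtain ⟨i, hi⟩ := h2 ⟨j, hj⟩
        exact ⟨i.1, i.2, (eqVal_collapse (e i.1) (f j)).mpr hi⟩
termination_by u v => HName.rank u ♯ HName.rank v
decreasing_by
  · calc HName.rank (f j) ♯ HName.rank (e i.1)
        < HName.rank (f j) ♯ HName.rank (HName.mk ι e a) :=
          Ordinal.nadd_lt_nadd_left (HName.rank_lt e a i.1) _
      _ ≤ HName.rank (HName.mk κ f b) ♯ HName.rank (HName.mk ι e a) :=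
          Ordinal.nadd_le_nadd_right (le_of_lt (HName.rank_lt f b j)) _
      _ = HName.rank (HName.mk ι e a) ♯ HName.rank (HName.mk κ f b) :=
          Ordinal.nadd_comm _ _
  · calc HName.rank (e i) ♯ HName.rank (f j.1)
        < HName.rank (e i) ♯ HName.rank (HName.mk κ f b) :=
          Ordinal.nadd_lt_nadd_left (HName.rank_lt f b j.1) _
      _ ≤ HName.rank (HName.mk ι e a) ♯ HName.rank (HName.mk κ f b) :=
          Ordinal.nadd_le_nadd_right (le_of_lt (HName.rank_lt e a i)) _
  · calc HName.rank (f j.1) ♯ HName.rank (e i)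
        < HName.rank (f j.1) ♯ HName.rank (HName.mk ι e a) :=
          Ordinal.nadd_lt_nadd_left (HName.rank_lt e a i) _
      _ ≤ HName.rank (HName.mk κ f b) ♯ HName.rank (HName.mk ι e a) :=
          Ordinal.nadd_le_nadd_right (le_of_lt (HName.rank_lt f b j.1)) _
      _ = HName.rank (HName.mk ι e a) ♯ HName.rank (HName.mk κ f b) :=
          Ordinal.nadd_comm _ _
  · calc HName.rank (e i.1) ♯ HName.rank (f j)
        < HName.rank (e i.1) ♯ HName.rank (HName.mk κ f b) :=
          Ordinal.nadd_lt_nadd_left (HName.rank_lt f b j) _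
      _ ≤ HName.rank (HName.mk ι e a) ♯ HName.rank (HName.mk κ f b) :=
          Ordinal.nadd_le_nadd_right (le_of_lt (HName.rank_lt e a i.1)) _

theorem memVal_collapse (u v : HName Prop) :
    memVal u v ↔ collapse u ∈ collapse v := by
  obtain ⟨κ, f, b⟩ := v
  rw [collapse]
  show (⨆ j : κ, b j ⊓ eqVal (f j) u) ↔ _
  rw [iSup_Prop_eq, mem_pset_mk_iff]
  constructor
  · rintro ⟨j, hj, he⟩
    exact ⟨⟨j, hj⟩, ((eqVal_collapse (f j) u).mp he).symm⟩
  · rintro ⟨⟨j, hj⟩, he⟩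
    exact ⟨j, hj, (eqVal_collapse (f j) u).mpr he.symm⟩

theorem collapse_pcheck (x : PSet.{0}) :
    PSet.Equiv (collapse (pcheck Prop x)) x := by
  induction x with
  | mk α f ih =>
    rw [pcheck, collapse]
    exact ⟨fun i => ⟨i.1, ih i.1⟩, fun i => ⟨⟨i, trivial⟩, ih i⟩⟩

/-- Collapse of a `Prop`-name to a set. -/
noncomputable def collapseZ (u : HName Prop) : ZFSet.{0} := ZFSet.mk (collapse u)

theorem eqVal_collapseZ (u v : HName Prop) :
    eqVal u v ↔ collapseZ u = collapseZ v := by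
  rw [eqVal_collapse, collapseZ, collapseZ, ZFSet.eq]

theorem memVal_collapseZ (u v : HName Prop) :
    memVal u v ↔ collapseZ u ∈ collapseZ v := by
  rw [memVal_collapse, collapseZ, collapseZ, ZFSet.mk_mem_iff]

theorem collapseZ_check (v : ZFSet.{0}) : collapseZ (check Prop v) = v := by
  rw [collapseZ, check]
  rw [show ZFSet.mk (collapse (pcheck Prop v.out)) = ZFSet.mk v.out from
    ZFSet.eq.mpr (collapse_pcheck v.out), ZFSet.mk_out]

theorem collapseZ_snoc {n : Nat} (rho : Fin n → HName Prop) (u : HName Prop) :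
    (fun i => collapseZ ((Fin.snoc rho u : Fin (n+1) → HName Prop) i)) =
      Fin.snoc (fun i => collapseZ (rho i)) (collapseZ u) := by
  funext i
  refine Fin.lastCases ?_ (fun i => ?_) i <;>
    simp [Fin.snoc_last, Fin.snoc_castSucc]

theorem sat_iff_valIn {n : Nat} (phi : SFml n) (rho : Fin n → HName Prop) :
    phi.sat (fun i => collapseZ (rho i)) ↔
      SFml.valIn Prop (fun _ => True) phi rho := by
  induction phi with
  | mem i j =>
    simp only [SFml.sat, SFml.valIn]
    exact (memVal_collapseZ _ _).symm
  | eq i j =>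
    simp only [SFml.sat, SFml.valIn]
    exact (eqVal_collapseZ _ _).symm
  | and phi psi ih1 ih2 =>
    simp only [SFml.sat, SFml.valIn]
    rw [← ih1 rho, ← ih2 rho]
    simp
  | or phi psi ih1 ih2 =>
    simp only [SFml.sat, SFml.valIn]
    rw [← ih1 rho, ← ih2 rho]
    simp
  | imp phi psi ih1 ih2 =>
    simp only [SFml.sat, SFml.valIn]
    rw [← ih1 rho, ← ih2 rho]
    simp
  | ex phi ih =>
    simp only [SFml.sat, SFml.valIn, iSup_Prop_eq]
    constructor
    · rintro ⟨v, hv⟩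
      refine ⟨⟨check Prop v, trivial⟩, ?_⟩
      rw [← ih]
      rw [collapseZ_snoc, collapseZ_check]
      exact hv
    · rintro ⟨⟨u, _⟩, hu⟩
      refine ⟨collapseZ u, ?_⟩
      rw [← collapseZ_snoc]
      exact (ih _).mpr hu
  | all phi ih =>
    simp only [SFml.sat, SFml.valIn, iInf_Prop_eq]
    constructor
    · rintro h ⟨u, _⟩
      have := h (collapseZ u)
      rw [← collapseZ_snoc] at this
      exact (ih _).mp this
    · intro h v
      have := h ⟨check Prop v, trivial⟩
      rw [← ih, collapseZ_snoc, collapseZ_check] at this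
      exact this

end PropAlg

/-- Absoluteness of check-names: (i) over the two-element Boolean algebra
(modeled by `Prop`), a negation-free sentence with set parameters holds in the
universe of sets iff its truth value at the check-name parameters is `1`; and
(ii) over any complete Heyting algebra `A` with `0 ≠ 1`, the same holds for
every restricted negation-free sentence. -/
theorem check_absoluteness :
    (∀ {n : Nat} (psi : SFml n) (x : Fin n → ZFSet.{0}),
        psi.sat x ↔
          SFml.valIn Prop (fun _ => True) psi (fun i => check Prop (x i)) = ⊤) ∧
      ∀ (A : Type u) [Order.Frame A], (⊥ : A) ≠ ⊤ →
        ∀ {n : Nat} (phi : SFml n), phi.Restricted →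
          ∀ x : Fin n → ZFSet.{u},
            phi.sat x ↔
              SFml.valIn A (fun _ => True) phi (fun i => check A (x i)) = ⊤ := by
  constructor
  · intro n psi x
    have h := sat_iff_valIn psi (fun i => check Prop (x i))
    have hx : (fun i => collapseZ (check Prop (x i))) = x := by
      funext i; exact collapseZ_check (x i)
    rw [hx] at h
    constructor
    · intro hs
      simpa using h.mp hs
    · intro ht
      exact h.mpr (by simpa using ht)
  · intro A _ hbot n phi hres x
    rw [valIn_check_restricted hres x]
    by_cases h : phi.sat x
    · simp [h]
    · simp [h, hbot]
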